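/- The product (−1)^{m(m−1)/2} · ∏_{i=1}^{m−1} [i! · (−1)^i C(m−1,i) i!] equals [(m−1)!]^m, for all m ≥ 2. -/
import Mathlib

lemma key_prod (n : ℕ) :
    (∏ j ∈ Finset.range n,
      (Nat.choose n (j + 1) * ((j + 1).factorial * (j + 1).factorial))) =
    n.factorial ^ (n + 1) := by
  have h1 : (∏ j ∈ Finset.range n, (n - (j + 1)).factorial)
      = ∏ j ∈ Finset.range n, j.factorial := by
    rw [← Finset.prod_range_reflect]
    apply Finset.prod_congr rfl
    intro j hj
    congr 1
    have := Finset.mem_range.mp hj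
    omega
  have hpos : 0 < ∏ j ∈ Finset.range n, (n - (j + 1)).factorial :=
    Finset.prod_pos fun j _ => Nat.factorial_pos _
  apply Nat.eq_of_mul_eq_mul_right hpos
  rw [← Finset.prod_mul_distrib]
  have h2 : ∀ j ∈ Finset.range n,
      Nat.choose n (j + 1) * ((j + 1).factorial * (j + 1).factorial) *
        (n - (j + 1)).factorial = n.factorial * (j + 1).factorial := by
    intro j hj
    have hle : j + 1 ≤ n := Finset.mem_range.mp hj
    calc Nat.choose n (j + 1) * ((j + 1).factorial * (j + 1).factorial) *
          (n - (j + 1)).factorial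
        = (Nat.choose n (j + 1) * (j + 1).factorial * (n - (j + 1)).factorial) *
          (j + 1).factorial := by ring
      _ = n.factorial * (j + 1).factorial := by
          rw [Nat.choose_mul_factorial_mul_factorial hle]
  rw [Finset.prod_congr rfl h2, Finset.prod_mul_distrib, Finset.prod_const, h1]
  have h3 : (∏ j ∈ Finset.range n, (j + 1).factorial)
      = (∏ j ∈ Finset.range n, j.factorial) * n.factorial := by
    have ha := Finset.prod_range_succ (fun j => j.factorial) n
    have hb := Finset.prod_range_succ' (fun j => j.factorial) n
    simp only [Nat.factorial_zero, mul_one] at hb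
    rw [← hb, ha]
  rw [h3]
  simp [Finset.card_range]
  ring

/-- (−1)^{m(m−1)/2} · ∏_{i=1}^{m−1} [i! · (−1)^i C(m−1,i) i!]
equals [(m−1)!]^m, for all m ≥ 2. -/
theorem diag_product_identity (m : ℕ) (hm : 2 ≤ m) :
    ((-1 : ℤ) ^ (m * (m - 1) / 2) *
        ∏ i ∈ Finset.range (m - 1),
          (((i + 1).factorial : ℤ) *
            ((-1 : ℤ) ^ (i + 1) * (Nat.choose (m - 1) (i + 1) : ℤ) *
              ((i + 1).factorial : ℤ)))) =
      ((m - 1).factorial : ℤ) ^ m := by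
  obtain ⟨n, rfl⟩ : ∃ n, m = n + 1 := ⟨m - 1, by omega⟩
  simp only [Nat.add_sub_cancel]
  have hsplit : ∀ i ∈ Finset.range n,
      (((i + 1).factorial : ℤ) *
        ((-1 : ℤ) ^ (i + 1) * (Nat.choose n (i + 1) : ℤ) *
          ((i + 1).factorial : ℤ)))
      = (-1 : ℤ) ^ (i + 1) *
        ((Nat.choose n (i + 1) * ((i + 1).factorial * (i + 1).factorial) : ℕ) : ℤ) := by
    intro i _
    push_cast
    ring
  rw [Finset.prod_congr rfl hsplit, Finset.prod_mul_distrib,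
    Finset.prod_pow_eq_pow_sum, ← Finset.prod_natCast, key_prod]
  have hsum : ∑ i ∈ Finset.range n, (i + 1) = (n + 1) * n / 2 := by
    have := Finset.sum_range_id_mul_two (n + 1)
    simp only [Nat.add_sub_cancel] at this
    have h2 : ∑ i ∈ Finset.range (n + 1), i = ∑ i ∈ Finset.range n, (i + 1) := by
      rw [Finset.sum_range_succ' (fun i => i) n]; simp
    omega
  rw [hsum, ← mul_assoc, ← pow_add, Even.neg_one_pow (by exact ⟨(n+1)*n/2, by ring⟩)]
  push_cast
  ring
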